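/- Let B(n) denote the number of partitions of an n-element set (the Bell numbers: B(0)=1, B(1)=1, B(2)=2, B(3)=5, B(4)=15, B(5)=52, …). Then, as formal power series over ℚ, ∑_{n≥0} B(n)·X^n/n! = exp(exp(X) − 1), where the right-hand side is the composition of the exponential power series with the zero-constant-term series exp(X) − 1. -/

import Mathlib

/-- Composition `g ∘ T` of formal power series over `ℚ`, valid (equal to the usual
substitution) when `T` has zero constant term: the `k`-th coefficient is
`∑_{n ≤ k} (coeff n g) · (coeff k (T^n))`. -/
noncomputable def PowerSeries.comp (g T : PowerSeries ℚ) : PowerSeries ℚ :=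
  PowerSeries.mk fun k =>
    ∑ n ∈ Finset.range (k + 1), PowerSeries.coeff n g * PowerSeries.coeff k (T ^ n)

namespace BellAux

open Finset PowerSeries

noncomputable def c (k : ℕ) : ℚ :=
  PowerSeries.coeff k (PowerSeries.comp (PowerSeries.exp ℚ) (PowerSeries.exp ℚ - 1))

lemma coeff_comp (g T : PowerSeries ℚ) (k : ℕ) :
    PowerSeries.coeff k (PowerSeries.comp g T) =
      ∑ n ∈ Finset.range (k + 1), PowerSeries.coeff n g * PowerSeries.coeff k (T ^ n) := by
  simp [PowerSeries.comp, coeff_mk]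

lemma coeff_exp' (n : ℕ) : PowerSeries.coeff n (exp ℚ) = 1 / (n.factorial : ℚ) := by
  simp [PowerSeries.coeff_exp]

lemma constCoeff_T : PowerSeries.constantCoeff (exp ℚ - 1) = 0 := by
  simp [PowerSeries.constantCoeff_exp]

lemma vanish {m n : ℕ} (h : m < n) : PowerSeries.coeff m ((exp ℚ - 1) ^ n) = 0 := by
  have h1 : (PowerSeries.X : PowerSeries ℚ) ∣ (exp ℚ - 1) :=
    PowerSeries.X_dvd_iff.mpr constCoeff_T
  have h2 : (PowerSeries.X : PowerSeries ℚ) ^ n ∣ (exp ℚ - 1) ^ n :=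
    pow_dvd_pow_of_dvd h1 n
  exact PowerSeries.X_pow_dvd_iff.mp h2 m h

lemma dexp : PowerSeries.derivative ℚ (exp ℚ) = exp ℚ := by
  ext n
  rw [PowerSeries.coeff_derivative, coeff_exp', coeff_exp', Nat.factorial_succ]
  have h1 : ((n.factorial : ℚ)) ≠ 0 := Nat.cast_ne_zero.mpr n.factorial_ne_zero
  have h2 : ((n : ℚ) + 1) ≠ 0 := by positivity
  push_cast
  field_simp

lemma dT : PowerSeries.derivative ℚ (exp ℚ - 1) = exp ℚ := by
  rw [map_sub, Derivation.map_one_eq_zero, dexp, sub_zero]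

lemma dTpow (n : ℕ) :
    PowerSeries.derivative ℚ ((exp ℚ - 1) ^ (n + 1)) =
      ((n : ℚ) + 1) • ((exp ℚ - 1) ^ n * exp ℚ) := by
  rw [Derivation.leibniz_pow, dT]
  simp only [Nat.add_sub_cancel, smul_eq_mul]
  rw [nsmul_eq_mul, PowerSeries.smul_eq_C_mul]
  push_cast
  simp only [map_add, map_one, map_natCast]

lemma key (n k : ℕ) :
    ((k : ℚ) + 1) * PowerSeries.coeff (k + 1) ((exp ℚ - 1) ^ (n + 1)) =
      ((n : ℚ) + 1) * PowerSeries.coeff k ((exp ℚ - 1) ^ n * exp ℚ) := by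
  have h := PowerSeries.coeff_derivative ((exp ℚ - 1) ^ (n + 1)) k
  rw [dTpow, map_smul, smul_eq_mul] at h
  push_cast at h
  linarith [h]

lemma R2 (k : ℕ) :
    ((k : ℚ) + 1) * c (k + 1) = ∑ i ∈ Finset.range (k + 1), c i / ((k - i).factorial : ℚ) := by
  have hc : c (k + 1) =
      ∑ n ∈ Finset.range (k + 2),
        (1 / (n.factorial : ℚ)) * PowerSeries.coeff (k + 1) ((exp ℚ - 1) ^ n) := by
    rw [c, coeff_comp]
    refine Finset.sum_congr rfl fun n _ => by rw [coeff_exp']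
  rw [hc, Finset.mul_sum]
  rw [Finset.sum_range_succ']
  have h0 : ((k : ℚ) + 1) * ((1 / ((0 : ℕ).factorial : ℚ)) *
      PowerSeries.coeff (k + 1) ((exp ℚ - 1) ^ 0)) = 0 := by
    simp [PowerSeries.coeff_one]
  rw [h0, add_zero]
  have hterm : ∀ n ∈ Finset.range (k + 1),
      ((k : ℚ) + 1) * ((1 / (((n : ℕ) + 1).factorial : ℚ)) *
        PowerSeries.coeff (k + 1) ((exp ℚ - 1) ^ (n + 1))) =
      (1 / (n.factorial : ℚ)) * PowerSeries.coeff k ((exp ℚ - 1) ^ n * exp ℚ) := by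
    intro n _
    have hk := key n k
    have h1 : ((n.factorial : ℚ)) ≠ 0 := Nat.cast_ne_zero.mpr n.factorial_ne_zero
    have h2 : ((n : ℚ) + 1) ≠ 0 := by positivity
    have h3 : ((((n : ℕ) + 1).factorial : ℚ)) = ((n : ℚ) + 1) * (n.factorial : ℚ) := by
      rw [Nat.factorial_succ]; push_cast; ring
    rw [h3]
    field_simp
    nlinarith [hk]
  rw [Finset.sum_congr rfl hterm]
  have hmul : ∀ n ∈ Finset.range (k + 1),
      (1 / (n.factorial : ℚ)) * PowerSeries.coeff k ((exp ℚ - 1) ^ n * exp ℚ) =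
      ∑ i ∈ Finset.range (k + 1),
        (if n ≤ i then (1 / (n.factorial : ℚ)) * PowerSeries.coeff i ((exp ℚ - 1) ^ n) *
          (1 / ((k - i).factorial : ℚ)) else 0) := by
    intro n _
    rw [PowerSeries.coeff_mul, Finset.Nat.sum_antidiagonal_eq_sum_range_succ_mk, Finset.mul_sum]
    refine Finset.sum_congr rfl fun i _ => ?_
    by_cases hni : n ≤ i
    · rw [if_pos hni, coeff_exp']
      ring
    · rw [if_neg hni, vanish (by omega)]
      ring
  rw [Finset.sum_congr rfl hmul, Finset.sum_comm]
  refine Finset.sum_congr rfl fun i hi => ?_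
  have hik : i ≤ k := by simpa [Nat.lt_succ_iff] using hi
  have hci : c i = ∑ n ∈ Finset.range (i + 1),
      (1 / (n.factorial : ℚ)) * PowerSeries.coeff i ((exp ℚ - 1) ^ n) := by
    rw [c, coeff_comp]
    refine Finset.sum_congr rfl fun n _ => by rw [coeff_exp']
  have hfilter : ∑ n ∈ Finset.range (k + 1),
        (if n ≤ i then (1 / (n.factorial : ℚ)) * PowerSeries.coeff i ((exp ℚ - 1) ^ n) *
          (1 / ((k - i).factorial : ℚ)) else 0)
      = ∑ n ∈ Finset.range (i + 1),
        (1 / (n.factorial : ℚ)) * PowerSeries.coeff i ((exp ℚ - 1) ^ n) *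
          (1 / ((k - i).factorial : ℚ)) := by
    rw [← Finset.sum_filter]
    refine Finset.sum_congr ?_ fun n _ => rfl
    ext n
    simp only [Finset.mem_filter, Finset.mem_range]
    omega
  rw [hfilter, hci, Finset.sum_div]
  exact Finset.sum_congr rfl fun n _ => mul_one_div _ _


lemma ker_rel {α β : Type*} (f : α → β) (x y : α) : Setoid.ker f x y ↔ f x = f y := Iff.rfl

lemma comap_rel' {α β : Type*} (f : α → β) (r : Setoid β) (x y : α) :
    Setoid.comap f r x y ↔ r (f x) (f y) := Iff.rfl

instance finiteSetoid (α : Type*) [Finite α] : Finite (Setoid α) :=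
  Finite.of_injective (fun r : Setoid α => r.r)
    (fun r s h => Setoid.ext fun a b => iff_of_eq (congrFun (congrFun h a) b))

/-- Transport setoids along an equivalence. -/
def setoidCongr {α β : Type*} (e : α ≃ β) : Setoid α ≃ Setoid β where
  toFun r := Setoid.comap e.symm r
  invFun r := Setoid.comap e r
  left_inv r := Setoid.ext fun a b => by
    rw [comap_rel', comap_rel', e.symm_apply_apply, e.symm_apply_apply]
  right_inv r := Setoid.ext fun a b => by
    rw [comap_rel', comap_rel', e.apply_symm_apply, e.apply_symm_apply]

open Classical in
noncomputable def invF {α : Type*} (s : Set α) (r : Setoid (↥sᶜ)) :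
    Option α → Option (Quotient r) := fun x =>
  match x with
  | none => none
  | some a => if h : a ∈ s then none else some (Quotient.mk r ⟨a, Set.mem_compl h⟩)

noncomputable def toSetoid {α : Type*} (x : Σ s : Set α, Setoid ↥sᶜ) : Setoid (Option α) :=
  Setoid.ker (invF x.1 x.2)

lemma invF_none {α : Type*} (s : Set α) (r : Setoid (↥sᶜ)) : invF s r none = none := rfl

open Classical in
lemma invF_some_mem {α : Type*} {s : Set α} (r : Setoid (↥sᶜ)) {a : α} (ha : a ∈ s) :
    invF s r (some a) = none := by simp [invF, ha]

open Classical in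
lemma invF_some_not_mem {α : Type*} {s : Set α} (r : Setoid (↥sᶜ)) {a : α} (ha : a ∉ s) :
    invF s r (some a) = some (Quotient.mk r ⟨a, Set.mem_compl ha⟩) := by simp [invF, ha]

lemma invF_some_eq_none_iff {α : Type*} {s : Set α} (r : Setoid (↥sᶜ)) (a : α) :
    invF s r (some a) = none ↔ a ∈ s := by
  by_cases ha : a ∈ s
  · simp [invF_some_mem r ha, ha]
  · simp [invF_some_not_mem r ha, ha]

lemma invF_some_eq_some_iff {α : Type*} {s : Set α} (r : Setoid (↥sᶜ)) (a b : ↥sᶜ) :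
    invF s r (some a.1) = invF s r (some b.1) ↔ r a b := by
  have ha : (a : α) ∉ s := a.2
  have hb : (b : α) ∉ s := b.2
  rw [invF_some_not_mem r ha, invF_some_not_mem r hb, Option.some.injEq]
  constructor
  · intro h
    exact Quotient.exact h
  · intro h
    exact Quotient.sound h

lemma toSetoid_bij {α : Type*} :
    Function.Bijective (toSetoid : (Σ s : Set α, Setoid ↥sᶜ) → Setoid (Option α)) := by
  constructor
  · rintro ⟨s₁, r₁⟩ ⟨s₂, r₂⟩ h
    have hrel : ∀ x y : Option α, invF s₁ r₁ x = invF s₁ r₁ y ↔ invF s₂ r₂ x = invF s₂ r₂ y :=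
      fun x y => by
        have := Setoid.ext_iff.mp h x y
        rw [toSetoid, toSetoid, ker_rel, ker_rel] at this
        exact this
    have hs : s₁ = s₂ := by
      ext a
      rw [← invF_some_eq_none_iff r₁ a, ← invF_some_eq_none_iff r₂ a,
        ← invF_none s₁ r₁, ← invF_none s₂ r₂]
      exact hrel (some a) none
    subst hs
    have hr : r₁ = r₂ := Setoid.ext fun a b => by
      rw [← invF_some_eq_some_iff r₁ a b, ← invF_some_eq_some_iff r₂ a b]
      exact hrel (some a.1) (some b.1)
    rw [hr]
  · intro r
    refine ⟨⟨{a | r (some a) none}, Setoid.comap (fun x => (some x.1 : Option α)) r⟩, ?_⟩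
    refine Setoid.ext fun x y => ?_
    rw [toSetoid, ker_rel]
    match x, y with
    | none, none => simpa [invF_none] using r.refl none
    | some a, none =>
        rw [invF_none, invF_some_eq_none_iff]
        exact Iff.rfl
    | none, some b =>
        rw [invF_none, eq_comm, invF_some_eq_none_iff]
        exact ⟨fun h => r.symm h, fun h => r.symm h⟩
    | some a, some b =>
        by_cases ha : a ∈ {a | r (some a) none} <;> by_cases hb : b ∈ {a | r (some a) none}
        · rw [invF_some_mem _ ha, invF_some_mem _ hb]
          exact iff_of_true rfl (r.trans ha (r.symm hb))
        · rw [invF_some_mem _ ha, invF_some_not_mem _ hb]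
          refine iff_of_false (by simp) fun h => hb (r.trans (r.symm h) ha)
        · rw [invF_some_not_mem _ ha, invF_some_mem _ hb]
          refine iff_of_false (by simp) fun h => ha (r.trans h hb)
        · exact (invF_some_eq_some_iff (Setoid.comap (fun x => (some x.1 : Option α)) r)
            ⟨a, Set.mem_compl ha⟩ ⟨b, Set.mem_compl hb⟩).trans (comap_rel' _ r _ _)

open Finset

/-- `B' n` is the number of setoids on `Fin n`. -/
noncomputable def B' (n : ℕ) : ℕ := Nat.card (Setoid (Fin n))

lemma B'_zero : B' 0 = 1 := by
  have h1 : Subsingleton (Setoid (Fin 0)) :=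
    ⟨fun r s => Setoid.ext fun a => a.elim0⟩
  have h2 : Nonempty (Setoid (Fin 0)) := ⟨⊥⟩
  rw [B', Nat.card_eq_one_iff_unique]
  exact ⟨h1, h2⟩

lemma B'_succ (k : ℕ) : B' (k + 1) = ∑ j ∈ Finset.range (k + 1), k.choose j * B' j := by
  classical
  have e1 : Setoid (Fin (k + 1)) ≃ Setoid (Option (Fin k)) := setoidCongr (finSuccEquiv k)
  have e2 : (Σ s : Set (Fin k), Setoid ↥sᶜ) ≃ Setoid (Option (Fin k)) :=
    Equiv.ofBijective _ toSetoid_bij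
  letI : ∀ s : Set (Fin k), Fintype (Setoid ↥sᶜ) := fun s => Fintype.ofFinite _
  have h1 : B' (k + 1) = ∑ s : Set (Fin k), Nat.card (Setoid ↥sᶜ) := by
    rw [B', Nat.card_congr (e1.trans e2.symm), Nat.card_eq_fintype_card,
      Fintype.card_sigma]
    exact Finset.sum_congr rfl fun s _ => (Nat.card_eq_fintype_card).symm
  have h2 : ∀ s : Set (Fin k), Nat.card (Setoid ↥sᶜ) = B' (Fintype.card ↥sᶜ) := fun s =>
    Nat.card_congr (setoidCongr (Fintype.equivFin ↥sᶜ))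
  rw [h1, Finset.sum_congr rfl fun s _ => h2 s]
  rw [← (Fintype.finsetEquivSet (α := Fin k)).sum_comp
    (fun s : Set (Fin k) => B' (Fintype.card ↥sᶜ))]
  have h3 : ∀ t : Finset (Fin k),
      B' (Fintype.card ↥(((Fintype.finsetEquivSet t) : Set (Fin k))ᶜ)) = B' (k - t.card) := by
    intro t
    congr 1
    rw [Fintype.card_compl_set]
    rw [Fintype.card_fin]
    congr 1
    rw [Fintype.card_eq_nat_card, ← Fintype.card_coe t, Fintype.card_eq_nat_card]
    rfl
  rw [Finset.sum_congr rfl fun t _ => h3 t]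
  have h4 : (Finset.univ : Finset (Finset (Fin k))) = (Finset.univ : Finset (Fin k)).powerset := by
    simp
  rw [h4, Finset.sum_powerset]
  have h5 : #(Finset.univ : Finset (Fin k)) = k := by simp
  rw [h5]
  have h6 : ∀ j ∈ Finset.range (k + 1),
      ∑ t ∈ Finset.powersetCard j (Finset.univ : Finset (Fin k)), B' (k - t.card) =
        k.choose j * B' (k - j) := by
    intro j _
    rw [Finset.sum_congr rfl fun t ht => by
      rw [(Finset.mem_powersetCard.mp ht).2]]
    rw [Finset.sum_const, Finset.card_powersetCard, h5, smul_eq_mul]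
  rw [Finset.sum_congr rfl h6]
  rw [← Finset.sum_range_reflect]
  refine Finset.sum_congr rfl fun j hj => ?_
  have hjk : j ≤ k := Nat.lt_succ_iff.mp (Finset.mem_range.mp hj)
  have h7 : k + 1 - 1 - j = k - j := by omega
  rw [h7, Nat.sub_sub_self hjk, Nat.choose_symm hjk]

end BellAux

/-- The exponential generating function of the Bell numbers (numbers of partitions of an
`n`-element set) is `exp(exp(X) - 1)`. -/
theorem stmt7 (B : ℕ → ℕ)
    (hB : ∀ n : ℕ, B n = Nat.card {P : Set (Set (Fin n)) // Setoid.IsPartition P}) :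
    (PowerSeries.mk fun n => (B n : ℚ) / (n.factorial : ℚ)) =
      PowerSeries.comp (PowerSeries.exp ℚ) (PowerSeries.exp ℚ - 1) := by
  have hB' : ∀ n, B n = BellAux.B' n := by
    intro n
    rw [hB n, BellAux.B']
    exact (Nat.card_congr (Setoid.Partition.orderIso (Fin n)).toEquiv).symm
  have main : ∀ k, (BellAux.B' k : ℚ) / (k.factorial : ℚ) = BellAux.c k := by
    intro k
    induction k using Nat.strong_induction_on with
    | _ k ih =>
      match k with
      | 0 =>
        have h : BellAux.c 0 = 1 := by
          rw [BellAux.c, BellAux.coeff_comp]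
          simp [BellAux.coeff_exp']
        rw [h, BellAux.B'_zero]
        simp
      | k + 1 =>
        have h2 := BellAux.R2 k
        have h1 := BellAux.B'_succ k
        have hk1 : ((k : ℚ) + 1) ≠ 0 := by positivity
        have hfacsucc : (((k+1).factorial : ℚ)) = ((k : ℚ) + 1) * (k.factorial : ℚ) := by
          rw [Nat.factorial_succ]; push_cast; ring
        have hLHS : (BellAux.B' (k+1) : ℚ) / (((k+1).factorial : ℚ)) =
            (∑ i ∈ Finset.range (k+1),
              ((BellAux.B' i : ℚ) / (i.factorial : ℚ)) / (((k-i).factorial : ℚ))) /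
              ((k : ℚ) + 1) := by
          rw [h1, hfacsucc]
          push_cast
          rw [mul_comm ((k : ℚ) + 1), ← div_div, Finset.sum_div]
          congr 1
          refine Finset.sum_congr rfl fun i hi => ?_
          have hik : i ≤ k := Nat.lt_succ_iff.mp (Finset.mem_range.mp hi)
          rw [Nat.cast_choose ℚ hik]
          have hf1 : ((i.factorial : ℚ)) ≠ 0 := Nat.cast_ne_zero.mpr i.factorial_ne_zero
          have hf2 : (((k-i).factorial : ℚ)) ≠ 0 := Nat.cast_ne_zero.mpr (k-i).factorial_ne_zero
          have hf3 : ((k.factorial : ℚ)) ≠ 0 := Nat.cast_ne_zero.mpr k.factorial_ne_zero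
          field_simp
        have hRHS : BellAux.c (k+1) =
            (∑ i ∈ Finset.range (k+1), BellAux.c i / (((k-i).factorial : ℚ))) /
              ((k : ℚ) + 1) := by
          rw [← h2]
          rw [mul_comm, mul_div_assoc, div_self hk1, mul_one]
        rw [hLHS, hRHS]
        congr 1
        exact Finset.sum_congr rfl fun i hi =>
          by rw [ih i (Finset.mem_range.mp hi)]
  ext k
  rw [PowerSeries.coeff_mk, hB' k, main k, BellAux.c]
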